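/- For any subset A of a topological space X, the e*-θ-kernel of A satisfies e*-ker_θ(A) = {x ∈ X : e*-cl_θ({x}) ∩ A ≠ ∅}. -/
import Mathlib


open Set Topology

variable {X : Type*} [TopologicalSpace X]

/-- δ-closure of A. -/
def deltaCl (A : Set X) : Set X :=
  {x | ∀ U : Set X, IsOpen U → x ∈ U → (interior (closure U) ∩ A).Nonempty}

/-- A is e*-open if A ⊆ cl(int(δ-cl A)). -/
def EStarOpen (A : Set X) : Prop := A ⊆ closure (interior (deltaCl A))

/-- A is e*-closed if its complement is e*-open. -/
def EStarClosed (A : Set X) : Prop := EStarOpen Aᶜ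

/-- e*-closure: intersection of all e*-closed supersets. -/
def eStarCl (A : Set X) : Set X := ⋂₀ {F | EStarClosed F ∧ A ⊆ F}

/-- e*-interior: union of all e*-open subsets. -/
def eStarInt (A : Set X) : Set X := ⋃₀ {U | EStarOpen U ∧ U ⊆ A}

/-- e*-regular: both e*-open and e*-closed. -/
def EStarRegular (A : Set X) : Prop := EStarOpen A ∧ EStarClosed A

/-- e*-θ-closure. -/
def eStarClTheta (A : Set X) : Set X :=
  {x | ∀ U : Set X, EStarOpen U → x ∈ U → (eStarCl U ∩ A).Nonempty}

/-- e*-θ-closed. -/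
def EStarThetaClosed (A : Set X) : Prop := A = eStarClTheta A

/-- e*-θ-open. -/
def EStarThetaOpen (A : Set X) : Prop := EStarThetaClosed Aᶜ

/-- quasi e*-θ-closed. -/
def QEStarThetaClosed (A : Set X) : Prop :=
  ∀ U : Set X, EStarThetaOpen U → A ⊆ U → eStarClTheta A ⊆ U

/-- e*-θ-kernel. -/
def eStarKerTheta (A : Set X) : Set X := ⋂₀ {U | EStarThetaOpen U ∧ A ⊆ U}

lemma deltaCl_mono {A B : Set X} (h : A ⊆ B) : deltaCl A ⊆ deltaCl B := by
  intro x hx U hU hxU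
  obtain ⟨y, hy1, hy2⟩ := hx U hU hxU
  exact ⟨y, hy1, h hy2⟩

lemma subset_deltaCl (A : Set X) : A ⊆ deltaCl A := by
  intro x hx U hU hxU
  exact ⟨x, interior_maximal subset_closure hU hxU, hx⟩

lemma isOpen_eStarOpen {U : Set X} (h : IsOpen U) : EStarOpen U :=
  fun x hx => subset_closure (interior_maximal (subset_deltaCl U) h hx)

lemma isClosed_eStarClosed {F : Set X} (h : IsClosed F) : EStarClosed F :=
  isOpen_eStarOpen h.isOpen_compl

lemma eStarOpen_sUnion {S : Set (Set X)} (h : ∀ U ∈ S, EStarOpen U) :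
    EStarOpen (⋃₀ S) := by
  intro x hx
  obtain ⟨U, hUS, hxU⟩ := hx
  exact closure_mono (interior_mono (deltaCl_mono (subset_sUnion_of_mem hUS)))
    (h U hUS hxU)

lemma eStarClosed_eStarCl (A : Set X) : EStarClosed (eStarCl A) := by
  unfold EStarClosed eStarCl
  rw [Set.compl_sInter]
  apply eStarOpen_sUnion
  rintro _ ⟨F, ⟨hF, _⟩, rfl⟩
  exact hF

lemma subset_eStarCl (A : Set X) : A ⊆ eStarCl A :=
  fun _ hx _ hF => hF.2 hx

lemma eStarCl_subset_of {A F : Set X} (hF : EStarClosed F) (h : A ⊆ F) :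
    eStarCl A ⊆ F :=
  fun _ hx => hx F ⟨hF, h⟩

lemma eStarOpen_eStarCl {U : Set X} (hU : EStarOpen U) : EStarOpen (eStarCl U) := by
  have h1 : EStarClosed (closure (interior (deltaCl U))) :=
    isClosed_eStarClosed isClosed_closure
  have h2 : eStarCl U ⊆ closure (interior (deltaCl U)) := eStarCl_subset_of h1 hU
  intro x hx
  exact closure_mono (interior_mono (deltaCl_mono (subset_eStarCl U))) (h2 hx)

lemma eStarCl_eStarCl (A : Set X) : eStarCl (eStarCl A) ⊆ eStarCl A :=
  eStarCl_subset_of (eStarClosed_eStarCl A) Set.Subset.rfl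

lemma subset_eStarClTheta (B : Set X) : B ⊆ eStarClTheta B :=
  fun x hx U _ hxU => ⟨x, subset_eStarCl U hxU, hx⟩

lemma eStarThetaClosed_clTheta (B : Set X) : EStarThetaClosed (eStarClTheta B) := by
  unfold EStarThetaClosed
  apply Set.Subset.antisymm (subset_eStarClTheta _)
  intro y hy U hU hyU
  have hR : EStarOpen (eStarCl U) := eStarOpen_eStarCl hU
  obtain ⟨z, hz1, hz2⟩ := hy _ hR (subset_eStarCl U hyU)
  obtain ⟨w, hw1, hw2⟩ := hz2 _ hR (eStarCl_eStarCl U hz1)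
  exact ⟨w, eStarCl_eStarCl U hw1, hw2⟩

theorem stmt17 (A : Set X) :
    eStarKerTheta A = {x : X | (eStarClTheta {x} ∩ A).Nonempty} := by
  ext x
  simp only [Set.mem_setOf_eq]
  constructor
  · intro hx
    by_contra h
    rw [Set.not_nonempty_iff_eq_empty] at h
    have hV : EStarThetaOpen (eStarClTheta {x})ᶜ := by
      unfold EStarThetaOpen
      rw [compl_compl]
      exact eStarThetaClosed_clTheta _
    have hAV : A ⊆ (eStarClTheta {x})ᶜ := by
      intro a ha hc
      exact absurd h (Set.nonempty_iff_ne_empty.mp ⟨a, hc, ha⟩)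
    exact hx _ ⟨hV, hAV⟩ (subset_eStarClTheta {x} rfl)
  · rintro ⟨a, ha1, ha2⟩ V ⟨hV, hAV⟩
    have haV : a ∉ Vᶜ := fun hc => hc (hAV ha2)
    rw [hV] at haV
    simp only [eStarClTheta, Set.mem_setOf_eq] at haV
    push_neg at haV
    obtain ⟨U, hU, haU, hUV⟩ := haV
    obtain ⟨x', hx'1, hx'2⟩ := ha1 U hU haU
    rw [Set.mem_singleton_iff] at hx'2
    subst hx'2
    by_contra hxV
    exact absurd hUV (Set.nonempty_iff_ne_empty.mp ⟨x', hx'1, hxV⟩)
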